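/- For α ∈ ℂ with α ≠ ±2, the degree 6 hypersurface U_α in ℙ⁴ defined by w⁴t² − t⁶/3 + w⁴x² + x⁶/3 + y⁶ + α y³z³ + z⁶ = 0 has singular locus consisting of exactly the single point [0:0:0:0:1]. -/

import Mathlib

/-!
STATEMENT 5: For α ∈ ℂ with α ≠ ±2, the degree 6 hypersurface
F = w⁴t² − t⁶/3 + w⁴x² + x⁶/3 + y⁶ + α y³z³ + z⁶ = 0 in ℙ⁴ has singular locus
exactly the single point [0:0:0:0:1].  In homogeneous coordinates
(t,x,y,z,w) ≠ 0, a point is a singular point of the hypersurface (i.e. F and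
all five partial derivatives of F vanish there) iff t = x = y = z = 0
(equivalently, the point is [0:0:0:0:1]). -/
theorem stmt_5 (α : ℂ) (hα : α ≠ 2 ∧ α ≠ -2) (t x y z w : ℂ)
    (hp : ¬(t = 0 ∧ x = 0 ∧ y = 0 ∧ z = 0 ∧ w = 0)) :
    (w ^ 4 * t ^ 2 - t ^ 6 / 3 + w ^ 4 * x ^ 2 + x ^ 6 / 3
        + y ^ 6 + α * y ^ 3 * z ^ 3 + z ^ 6 = 0 ∧           -- F = 0
      2 * w ^ 4 * t - 2 * t ^ 5 = 0 ∧                        -- ∂F/∂t = 0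
      2 * w ^ 4 * x + 2 * x ^ 5 = 0 ∧                        -- ∂F/∂x = 0
      6 * y ^ 5 + 3 * α * y ^ 2 * z ^ 3 = 0 ∧                -- ∂F/∂y = 0
      3 * α * y ^ 3 * z ^ 2 + 6 * z ^ 5 = 0 ∧                -- ∂F/∂z = 0
      4 * w ^ 3 * (t ^ 2 + x ^ 2) = 0)                       -- ∂F/∂w = 0
    ↔ (t = 0 ∧ x = 0 ∧ y = 0 ∧ z = 0) := by
  constructor
  · rintro ⟨hF, h1, h2, h3, h4, h5⟩
    have hα2 : α ^ 2 - 4 ≠ 0 := by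
      intro h
      rcases mul_eq_zero.mp (show (α - 2) * (α + 2) = 0 by linear_combination h) with h' | h'
      · exact hα.1 (by linear_combination h')
      · exact hα.2 (by linear_combination h')
    -- First: y = 0 and z = 0
    have h3' : y ^ 2 * (2 * y ^ 3 + α * z ^ 3) = 0 := by linear_combination h3 / 3
    have h4' : z ^ 2 * (α * y ^ 3 + 2 * z ^ 3) = 0 := by linear_combination h4 / 3
    have hz : z = 0 := by
      rcases mul_eq_zero.mp h4' with h | h
      · exact pow_eq_zero_iff (by norm_num) |>.mp h
      · rcases mul_eq_zero.mp h3' with h' | h'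
        · have hy : y = 0 := pow_eq_zero_iff (by norm_num) |>.mp h'
          have : z ^ 3 = 0 := by
            field_simp [hy] at h
            linear_combination h / 2 - (α * y ^ 2 / 2) * hy
          exact pow_eq_zero_iff (by norm_num) |>.mp this
        · have hz3 : (α ^ 2 - 4) * z ^ 3 = 0 := by linear_combination α * h' - 2 * h
          have : z ^ 3 = 0 := by
            rcases mul_eq_zero.mp hz3 with h'' | h''
            · exact absurd h'' hα2
            · exact h''
          exact pow_eq_zero_iff (by norm_num) |>.mp this
    have hy : y = 0 := by
      subst hz
      rcases mul_eq_zero.mp h3' with h | h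
      · exact pow_eq_zero_iff (by norm_num) |>.mp h
      · have : y ^ 3 = 0 := by
          have h' : 2 * y ^ 3 = 0 := by linear_combination h
          linear_combination h' / 2
        exact pow_eq_zero_iff (by norm_num) |>.mp this
    subst hy; subst hz
    -- Now the t, x, w part
    rcases mul_eq_zero.mp (show w ^ 3 * (t ^ 2 + x ^ 2) = 0 by linear_combination h5 / 4)
      with hw | he
    · have hw0 : w = 0 := pow_eq_zero_iff (by norm_num) |>.mp hw
      subst hw0
      have ht : t = 0 := by
        have : t ^ 5 = 0 := by linear_combination (-1 / 2 : ℂ) * h1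
        exact pow_eq_zero_iff (by norm_num) |>.mp this
      have hx : x = 0 := by
        have : x ^ 5 = 0 := by linear_combination h2 / 2
        exact pow_eq_zero_iff (by norm_num) |>.mp this
      exact ⟨ht, hx, rfl, rfl⟩
    · have ht6 : t ^ 6 = 0 := by
        linear_combination (-3 / 2 : ℂ) * hF
          + ((3 / 2 : ℂ) * w ^ 4 + (t ^ 4 - t ^ 2 * x ^ 2 + x ^ 4) / 2) * he
      have ht : t = 0 := pow_eq_zero_iff (by norm_num) |>.mp ht6
      have hx : x = 0 := by
        have : x ^ 2 = 0 := by
          subst ht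
          linear_combination he
        exact pow_eq_zero_iff (by norm_num) |>.mp this
      exact ⟨ht, hx, rfl, rfl⟩
  · rintro ⟨ht, hx, hy, hz⟩
    subst ht; subst hx; subst hy; subst hz
    refine ⟨by ring, by ring, by ring, by ring, by ring, by ring⟩
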